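/- Let X be a random variable with the standard Gaussian distribution N(0,1), let f(x) = exp(x), and let k be a positive integer. Then ∑_{i=1}^{2k−1} E[X^i] / i! ≤ E[exp(X)] − 1 ≤ √e · ∑_{i=1}^{2k−1} ((−1)^{i+1} / i!) · E[Y^i], where Y is a random variable with the Gaussian distribution N(1,1), and moreover E[exp(X)] − 1 = √e − 1. -/

import Mathlib

open MeasureTheory ProbabilityTheory Finset Real
open scoped ENNReal NNReal


lemma hasDerivAt_partialsum (n : ℕ) (x : ℝ) :
    HasDerivAt (fun x : ℝ => ∑ i ∈ range (n+1), x ^ i / (Nat.factorial i : ℝ))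
      (∑ i ∈ range n, x ^ i / (Nat.factorial i : ℝ)) x := by
  have h := HasDerivAt.sum
    (fun i (_ : i ∈ range (n+1)) => ((hasDerivAt_pow i x).div_const (Nat.factorial i : ℝ)))
  have heq : ∑ i ∈ range (n+1), (i : ℝ) * x ^ (i-1) / (Nat.factorial i : ℝ)
      = ∑ i ∈ range n, x ^ i / (Nat.factorial i : ℝ) := by
    rw [Finset.sum_range_succ']
    simp only [Nat.cast_zero, zero_mul, zero_div, add_zero, Nat.add_sub_cancel]
    refine Finset.sum_congr rfl fun i _ => ?_
    rw [Nat.factorial_succ]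
    push_cast
    have h1 : ((i:ℝ)+1) ≠ 0 := by positivity
    have h2 : ((Nat.factorial i :ℕ):ℝ) ≠ 0 := by positivity
    field_simp
  rw [← heq]
  rw [Finset.sum_fn] at h
  exact h

lemma partialsum_zero (j : ℕ) : ∑ i ∈ range (j+1), (0:ℝ) ^ i / (Nat.factorial i : ℝ) = 1 := by
  rw [Finset.sum_range_succ']
  simp

lemma sum_le_exp_even (m : ℕ) (x : ℝ) :
    ∑ i ∈ range (2*m+2), x ^ i / (Nat.factorial i : ℝ) ≤ Real.exp x := by
  induction m generalizing x with
  | zero =>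
    simp [Finset.sum_range_succ]
    linarith [Real.add_one_le_exp x]
  | succ m ih =>
    set F : ℕ → ℝ → ℝ := fun j x => Real.exp x - ∑ i ∈ range j, x ^ i / (Nat.factorial i : ℝ)
      with hF
    have hd : ∀ j x, HasDerivAt (F (j+1)) (F j x) x := fun j x =>
      (Real.hasDerivAt_exp x).sub (hasDerivAt_partialsum j x)
    have hF0 : ∀ j, F (j+1) 0 = 0 := fun j => by
      simp [hF, partialsum_zero j]
    rcases le_or_gt 0 x with hx | hx
    · exact Real.sum_le_exp_of_nonneg hx _
    · -- x < 0
      have hodd : ∀ y ≤ (0:ℝ), F (2*m+3) y ≤ 0 := by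
        intro y hy
        have hmono : Monotone (F (2*m+3)) := by
          apply monotone_of_deriv_nonneg
          · exact fun z => (hd _ z).differentiableAt
          · intro z
            rw [(hd _ z).deriv]
            have := ih z
            simp only [hF]
            have h22 : 2*m+2 = 2*(m+1) := by ring
            linarith [ih z]
        have := hmono hy
        rwa [hF0 (2*m+2)] at this
      have hanti : AntitoneOn (F (2*m+4)) (Set.Iic 0) := by
        apply antitoneOn_of_deriv_nonpos (convex_Iic 0)
        · exact Continuous.continuousOn (by
            exact (Real.continuous_exp.sub (by continuity)))
        · intro z hz
          exact (hd _ z).differentiableAt.differentiableWithinAt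
        · intro z hz
          rw [(hd _ z).deriv]
          exact hodd z (le_of_lt (by simpa using hz))
      have h := hanti (Set.mem_Iic.2 hx.le) (Set.mem_Iic.2 le_rfl) hx.le
      rw [hF0 (2*m+3)] at h
      have h24 : 2*(m+1)+2 = 2*m+4 := by ring
      rw [h24]
      simpa [hF, sub_nonneg] using h


lemma integral_gaussianReal_eq (μ : ℝ) (g : ℝ → ℝ) :
    ∫ x, g x ∂(gaussianReal μ 1) = ∫ x, g x * gaussianPDFReal μ 1 x := by
  rw [gaussianReal_of_var_ne_zero μ one_ne_zero]
  have hm : Measurable fun x => (gaussianPDFReal μ 1 x).toNNReal :=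
    (measurable_gaussianPDFReal μ 1).real_toNNReal
  have : (ℙ : Measure ℝ).withDensity (gaussianPDF μ 1)
      = (ℙ : Measure ℝ).withDensity (fun x => ((gaussianPDFReal μ 1 x).toNNReal : ℝ≥0∞)) := rfl
  rw [this, integral_withDensity_eq_integral_smul hm]
  congr 1; ext x
  rw [NNReal.smul_def, smul_eq_mul, Real.coe_toNNReal _ (gaussianPDFReal_nonneg _ _ _), mul_comm]

lemma integrable_gaussianReal_iff (μ : ℝ) (g : ℝ → ℝ) :
    Integrable g (gaussianReal μ 1) ↔ Integrable (fun x => g x * gaussianPDFReal μ 1 x) := by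
  rw [gaussianReal_of_var_ne_zero μ one_ne_zero,
    integrable_withDensity_iff (measurable_gaussianPDF μ 1) (by
      filter_upwards with x using ENNReal.ofReal_lt_top)]
  congr! 3 with x
  rw [gaussianPDF_def, ENNReal.toReal_ofReal (gaussianPDFReal_nonneg _ _ _)]

lemma pdf_mul_exp (μ c x : ℝ) :
    Real.exp (c * x) * gaussianPDFReal μ 1 x
      = Real.exp (c * μ + c^2/2) * gaussianPDFReal (μ + c) 1 x := by
  simp only [gaussianPDFReal, NNReal.coe_one, mul_one]
  rw [mul_left_comm, mul_left_comm (Real.exp (c * μ + c^2/2)), ← Real.exp_add, ← Real.exp_add]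
  congr 2
  ring

lemma integrable_exp_mul_gaussianReal (μ c : ℝ) :
    Integrable (fun x => Real.exp (c * x)) (gaussianReal μ 1) := by
  rw [integrable_gaussianReal_iff]
  have : (fun x => Real.exp (c * x) * gaussianPDFReal μ 1 x)
      = fun x => Real.exp (c * μ + c^2/2) * gaussianPDFReal (μ + c) 1 x := by
    ext x; exact pdf_mul_exp μ c x
  rw [this]
  exact (integrable_gaussianPDFReal (μ + c) 1).const_mul _

lemma integral_exp_mul_gaussianReal (μ c : ℝ) :
    ∫ x, Real.exp (c * x) ∂(gaussianReal μ 1) = Real.exp (c * μ + c^2/2) := by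
  rw [integral_gaussianReal_eq]
  simp_rw [pdf_mul_exp μ c]
  rw [integral_const_mul, integral_gaussianPDFReal_eq_one _ one_ne_zero, mul_one]

lemma integrable_pow_gaussianReal (μ : ℝ) (i : ℕ) :
    Integrable (fun x : ℝ => x ^ i) (gaussianReal μ 1) := by
  have hb : Integrable (fun x : ℝ => (Nat.factorial i : ℝ) *
      (Real.exp (1 * x) + Real.exp ((-1) * x))) (gaussianReal μ 1) :=
    ((integrable_exp_mul_gaussianReal μ 1).add (integrable_exp_mul_gaussianReal μ (-1))).const_mul _
  refine hb.mono' ((measurable_id.pow_const i).aestronglyMeasurable) ?_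
  filter_upwards with x
  have h1 : |x| ^ i / (Nat.factorial i : ℝ) ≤ Real.exp |x| := by
    calc |x| ^ i / (Nat.factorial i : ℝ)
        ≤ ∑ j ∈ Finset.range (i+1), |x| ^ j / (Nat.factorial j : ℝ) :=
          Finset.single_le_sum (f := fun j => |x| ^ j / (Nat.factorial j : ℝ))
            (fun j _ => by positivity) (Finset.self_mem_range_succ i)
      _ ≤ Real.exp |x| := Real.sum_le_exp_of_nonneg (abs_nonneg x) _
  have h2 : Real.exp |x| ≤ Real.exp (1*x) + Real.exp ((-1)*x) := by
    rw [one_mul, neg_one_mul]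
    rcases abs_cases x with ⟨h, _⟩ | ⟨h, _⟩ <;> rw [h]
    · linarith [Real.exp_pos (-x)]
    · linarith [Real.exp_pos x]
  have hfac : (1:ℝ) ≤ (Nat.factorial i : ℝ) := by exact_mod_cast Nat.one_le_iff_ne_zero.2 (Nat.factorial_ne_zero i)
  have : ‖x ^ i‖ = |x| ^ i := by rw [Real.norm_eq_abs, abs_pow]
  rw [this]
  calc |x| ^ i ≤ (Nat.factorial i : ℝ) * Real.exp |x| := by
        rw [div_le_iff₀ (by positivity)] at h1; linarith [h1]
    _ ≤ (Nat.factorial i : ℝ) * (Real.exp (1*x) + Real.exp ((-1)*x)) := by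
        have := Nat.factorial_pos i
        apply mul_le_mul_of_nonneg_left h2 (by positivity)


theorem jensen_gap_exp_gaussian
    {Ω : Type*} [MeasurableSpace Ω] (P : Measure Ω) [IsProbabilityMeasure P]
    (k : ℕ) (hk : 0 < k)
    (X Y : Ω → ℝ) (hX : Measurable X) (hY : Measurable Y)
    (hmapX : P.map X = gaussianReal 0 1)
    (hmapY : P.map Y = gaussianReal 1 1) :
    (∑ i ∈ Finset.Icc 1 (2 * k - 1), (∫ ω, X ω ^ i ∂P) / (Nat.factorial i : ℝ)
      ≤ (∫ ω, Real.exp (X ω) ∂P) - 1) ∧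
    ((∫ ω, Real.exp (X ω) ∂P) - 1
      ≤ Real.sqrt (Real.exp 1) *
          ∑ i ∈ Finset.Icc 1 (2 * k - 1),
            ((-1 : ℝ) ^ (i + 1) / (Nat.factorial i : ℝ)) * (∫ ω, Y ω ^ i ∂P)) ∧
    ((∫ ω, Real.exp (X ω) ∂P) - 1 = Real.sqrt (Real.exp 1) - 1) := by
  have hsqrt : Real.sqrt (Real.exp 1) = Real.exp (1/2) := (Real.exp_half 1).symm
  -- value of E[exp X]
  have hEexpX : ∫ ω, Real.exp (X ω) ∂P = Real.exp (1/2) := by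
    have h1 : ∫ ω, Real.exp (X ω) ∂P = ∫ x, Real.exp x ∂(P.map X) :=
      (integral_map hX.aemeasurable Real.measurable_exp.aestronglyMeasurable).symm
    rw [h1, hmapX]
    have := integral_exp_mul_gaussianReal 0 1
    simpa using this
  -- moments as integrals over gaussians
  have hXi : ∀ i : ℕ, ∫ ω, X ω ^ i ∂P = ∫ x, x ^ i ∂(gaussianReal 0 1) := fun i => by
    rw [← hmapX]
    exact (integral_map hX.aemeasurable
      ((measurable_id.pow_const i).aestronglyMeasurable)).symm
  have hYi : ∀ i : ℕ, ∫ ω, Y ω ^ i ∂P = ∫ y, y ^ i ∂(gaussianReal 1 1) := fun i => by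
    rw [← hmapY]
    exact (integral_map hY.aemeasurable
      ((measurable_id.pow_const i).aestronglyMeasurable)).symm
  have hrange : Finset.range (2*k) = insert 0 (Finset.Icc 1 (2*k-1)) := by
    ext i; simp only [Finset.mem_range, Finset.mem_insert, Finset.mem_Icc]; omega
  have h0notin : (0:ℕ) ∉ Finset.Icc 1 (2*k-1) := by simp
  have h2k : 2 * (k-1) + 2 = 2 * k := by omega
  refine ⟨?_, ?_, ?_⟩
  · -- Part 1
    have key : (1:ℝ) + ∑ i ∈ Finset.Icc 1 (2*k-1), (∫ x, x ^ i ∂(gaussianReal 0 1)) / (Nat.factorial i : ℝ)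
        ≤ ∫ x, Real.exp x ∂(gaussianReal 0 1) := by
      have hsum : (1:ℝ) + ∑ i ∈ Finset.Icc 1 (2*k-1), (∫ x, x ^ i ∂(gaussianReal 0 1)) / (Nat.factorial i : ℝ)
          = ∑ i ∈ Finset.range (2*k), ∫ x, x ^ i / (Nat.factorial i : ℝ) ∂(gaussianReal 0 1) := by
        rw [hrange, Finset.sum_insert h0notin]
        simp only [pow_zero, Nat.factorial_zero, Nat.cast_one]
        rw [integral_const]
        simp only [measure_univ, probReal_univ, ENNReal.toReal_one, smul_eq_mul, one_mul, div_one]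
        congr 1
        refine Finset.sum_congr rfl fun i _ => ?_
        rw [integral_div]
      rw [hsum, ← integral_finset_sum _
        (fun i _ => (integrable_pow_gaussianReal 0 i).div_const _)]
      have hintexp : Integrable (fun x => Real.exp x) (gaussianReal 0 1) := by
        have := integrable_exp_mul_gaussianReal 0 1
        simpa using this
      refine integral_mono (integrable_finset_sum _
        (fun i _ => (integrable_pow_gaussianReal 0 i).div_const _)) hintexp ?_
      intro x
      have := sum_le_exp_even (k-1) x
      rwa [h2k] at this
    calc ∑ i ∈ Finset.Icc 1 (2*k-1), (∫ ω, X ω ^ i ∂P) / (Nat.factorial i : ℝ)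
        = ∑ i ∈ Finset.Icc 1 (2*k-1), (∫ x, x ^ i ∂(gaussianReal 0 1)) / (Nat.factorial i : ℝ) := by
          refine Finset.sum_congr rfl fun i _ => by rw [hXi]
      _ ≤ (∫ x, Real.exp x ∂(gaussianReal 0 1)) - 1 := by linarith
      _ = (∫ ω, Real.exp (X ω) ∂P) - 1 := by
          rw [hEexpX]
          congr 1
          have := integral_exp_mul_gaussianReal 0 1
          simpa using this
  · -- Part 2
    -- rewrite terms of the sum
    have hterm : ∀ i : ℕ, ((-1:ℝ)^(i+1) / (Nat.factorial i : ℝ)) * (∫ ω, Y ω ^ i ∂P)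
        = -(∫ y, (-y) ^ i / (Nat.factorial i : ℝ) ∂(gaussianReal 1 1)) := by
      intro i
      rw [hYi]
      have hfun : (fun y : ℝ => (-y) ^ i / (Nat.factorial i : ℝ))
          = fun y => ((-1:ℝ)^i / (Nat.factorial i : ℝ)) * y ^ i := by
        ext y; rw [neg_pow]; ring
      rw [hfun, integral_const_mul, pow_succ]
      ring
    have hintneg : ∀ i : ℕ, Integrable (fun y : ℝ => (-y) ^ i / (Nat.factorial i : ℝ))
        (gaussianReal 1 1) := by
      intro i
      have hfun : (fun y : ℝ => (-y) ^ i / (Nat.factorial i : ℝ))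
          = fun y => ((-1:ℝ)^i / (Nat.factorial i : ℝ)) * y ^ i := by
        ext y; rw [neg_pow]; ring
      rw [hfun]
      exact (integrable_pow_gaussianReal 1 i).const_mul _
    have hintexp : Integrable (fun y => Real.exp (-y)) (gaussianReal 1 1) := by
      have := integrable_exp_mul_gaussianReal 1 (-1)
      simpa using this
    have hS : (1:ℝ) - Real.exp (-(1/2))
        ≤ ∑ i ∈ Finset.Icc 1 (2*k-1),
            ((-1:ℝ)^(i+1) / (Nat.factorial i : ℝ)) * (∫ ω, Y ω ^ i ∂P) := by
      have hle : ∫ y, (∑ i ∈ Finset.range (2*k), (-y) ^ i / (Nat.factorial i : ℝ)) ∂(gaussianReal 1 1)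
          ≤ Real.exp (-(1/2)) := by
        have hval : ∫ y, Real.exp (-y) ∂(gaussianReal 1 1) = Real.exp (-(1/2)) := by
          have := integral_exp_mul_gaussianReal 1 (-1)
          simp only [neg_one_mul] at this
          rw [this]; norm_num
        rw [← hval]
        refine integral_mono (integrable_finset_sum _ (fun i _ => hintneg i)) hintexp ?_
        intro y
        have := sum_le_exp_even (k-1) (-y)
        rwa [h2k] at this
      have hsplit : ∫ y, (∑ i ∈ Finset.range (2*k), (-y) ^ i / (Nat.factorial i : ℝ)) ∂(gaussianReal 1 1)
          = 1 + ∑ i ∈ Finset.Icc 1 (2*k-1), ∫ y, (-y) ^ i / (Nat.factorial i : ℝ) ∂(gaussianReal 1 1) := by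
        rw [integral_finset_sum _ (fun i _ => hintneg i), hrange, Finset.sum_insert h0notin]
        congr 1
        simp only [pow_zero, Nat.factorial_zero, Nat.cast_one, div_one]
        rw [integral_const]
        simp [measure_univ]
      have : ∑ i ∈ Finset.Icc 1 (2*k-1),
            ((-1:ℝ)^(i+1) / (Nat.factorial i : ℝ)) * (∫ ω, Y ω ^ i ∂P)
          = -(∑ i ∈ Finset.Icc 1 (2*k-1), ∫ y, (-y) ^ i / (Nat.factorial i : ℝ) ∂(gaussianReal 1 1)) := by
        rw [← Finset.sum_neg_distrib]
        exact Finset.sum_congr rfl fun i _ => hterm i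
      rw [this]
      rw [hsplit] at hle
      linarith
    rw [hEexpX, hsqrt]
    have hkey : Real.exp (1/2) * (1 - Real.exp (-(1/2))) = Real.exp (1/2) - 1 := by
      rw [mul_sub, mul_one, ← Real.exp_add]
      norm_num
    nlinarith [Real.exp_pos (1/2:ℝ), mul_le_mul_of_nonneg_left hS (Real.exp_pos (1/2:ℝ)).le]
  · rw [hEexpX, hsqrt]
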